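/- Let f : ℍ → ℍ be ℝ-differentiable at q. Then the real Fréchet derivative of f at q applied to any increment h ∈ ℍ satisfies Df(q)[h] = Σ_{μ∈{1,i,j,k}} (∂f/∂q^μ)(q) · (μ h μ⁻¹) and also Df(q)[h] = Σ_{μ∈{1,i,j,k}} (∂f/∂q^{μ*})(q) · (μ h μ⁻¹)^{*}. -/

import Mathlib

open scoped Quaternion

noncomputable section

/-- The imaginary unit `i` of the quaternions. -/
def qI : ℍ[ℝ] := ⟨0, 1, 0, 0⟩
/-- The imaginary unit `j` of the quaternions. -/
def qJ : ℍ[ℝ] := ⟨0, 0, 1, 0⟩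
/-- The imaginary unit `k` of the quaternions. -/
def qK : ℍ[ℝ] := ⟨0, 0, 0, 1⟩

/-- Left GHR derivative `∂f/∂q^μ` of a quaternion function of a quaternion variable:
`¼(∂f/∂q_a − (∂f/∂q_b) i^μ − (∂f/∂q_c) j^μ − (∂f/∂q_d) k^μ)`, with `x^μ = μ x μ⁻¹`, the
partials being the real directional (Fréchet) derivatives in directions `1, i, j, k`. -/
def ghrS (μ : ℍ[ℝ]) (f : ℍ[ℝ] → ℍ[ℝ]) (q : ℍ[ℝ]) : ℍ[ℝ] :=
  (1 / 4 : ℝ) • (fderiv ℝ f q 1 - fderiv ℝ f q qI * (μ * qI * μ⁻¹)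
    - fderiv ℝ f q qJ * (μ * qJ * μ⁻¹) - fderiv ℝ f q qK * (μ * qK * μ⁻¹))

/-- Conjugate left GHR derivative `∂f/∂q^{μ*}` of a quaternion function of a quaternion
variable. -/
def ghrSStar (μ : ℍ[ℝ]) (f : ℍ[ℝ] → ℍ[ℝ]) (q : ℍ[ℝ]) : ℍ[ℝ] :=
  (1 / 4 : ℝ) • (fderiv ℝ f q 1 + fderiv ℝ f q qI * (μ * qI * μ⁻¹)
    + fderiv ℝ f q qJ * (μ * qJ * μ⁻¹) + fderiv ℝ f q qK * (μ * qK * μ⁻¹))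


lemma qI_re : qI.re = 0 := rfl
lemma qI_imI : qI.imI = 1 := rfl
lemma qI_imJ : qI.imJ = 0 := rfl
lemma qI_imK : qI.imK = 0 := rfl
lemma qJ_re : qJ.re = 0 := rfl
lemma qJ_imI : qJ.imI = 0 := rfl
lemma qJ_imJ : qJ.imJ = 1 := rfl
lemma qJ_imK : qJ.imK = 0 := rfl
lemma qK_re : qK.re = 0 := rfl
lemma qK_imI : qK.imI = 0 := rfl
lemma qK_imJ : qK.imJ = 0 := rfl
lemma qK_imK : qK.imK = 1 := rfl

lemma qI_inv : qI⁻¹ = -qI :=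
  inv_eq_of_mul_eq_one_right (by ext <;> simp [qI_re, qI_imI, qI_imJ, qI_imK, qJ_re, qJ_imI, qJ_imJ, qJ_imK, qK_re, qK_imI, qK_imJ, qK_imK, Quaternion.re_mul, Quaternion.imI_mul, Quaternion.imJ_mul, Quaternion.imK_mul])

lemma qJ_inv : qJ⁻¹ = -qJ :=
  inv_eq_of_mul_eq_one_right (by ext <;> simp [qI_re, qI_imI, qI_imJ, qI_imK, qJ_re, qJ_imI, qJ_imJ, qJ_imK, qK_re, qK_imI, qK_imJ, qK_imK, Quaternion.re_mul, Quaternion.imI_mul, Quaternion.imJ_mul, Quaternion.imK_mul])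

lemma qK_inv : qK⁻¹ = -qK :=
  inv_eq_of_mul_eq_one_right (by ext <;> simp [qI_re, qI_imI, qI_imJ, qI_imK, qJ_re, qJ_imI, qJ_imJ, qJ_imK, qK_re, qK_imI, qK_imJ, qK_imK, Quaternion.re_mul, Quaternion.imI_mul, Quaternion.imJ_mul, Quaternion.imK_mul])

set_option maxHeartbeats 1000000 in
lemma ghr_key (A B C D h : ℍ[ℝ]) :
    h.re • A + h.imI • B + h.imJ • C + h.imK • D =
      (1 / 4 : ℝ) • (A - B * ((1:ℍ[ℝ]) * qI * (1:ℍ[ℝ])⁻¹) - C * ((1:ℍ[ℝ]) * qJ * (1:ℍ[ℝ])⁻¹)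
          - D * ((1:ℍ[ℝ]) * qK * (1:ℍ[ℝ])⁻¹)) * ((1:ℍ[ℝ]) * h * (1:ℍ[ℝ])⁻¹)
        + (1 / 4 : ℝ) • (A - B * (qI * qI * qI⁻¹) - C * (qI * qJ * qI⁻¹)
          - D * (qI * qK * qI⁻¹)) * (qI * h * qI⁻¹)
        + (1 / 4 : ℝ) • (A - B * (qJ * qI * qJ⁻¹) - C * (qJ * qJ * qJ⁻¹)
          - D * (qJ * qK * qJ⁻¹)) * (qJ * h * qJ⁻¹)
        + (1 / 4 : ℝ) • (A - B * (qK * qI * qK⁻¹) - C * (qK * qJ * qK⁻¹)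
          - D * (qK * qK * qK⁻¹)) * (qK * h * qK⁻¹) := by
  simp only [qI_inv, qJ_inv, qK_inv, one_mul, mul_one, inv_one]
  ext <;>
    simp only [Quaternion.re_add, Quaternion.imI_add, Quaternion.imJ_add, Quaternion.imK_add,
      Quaternion.re_sub, Quaternion.imI_sub, Quaternion.imJ_sub, Quaternion.imK_sub,
      Quaternion.re_neg, Quaternion.imI_neg, Quaternion.imJ_neg, Quaternion.imK_neg,
      Quaternion.re_smul, Quaternion.imI_smul, Quaternion.imJ_smul, Quaternion.imK_smul,
      Quaternion.re_mul, Quaternion.imI_mul, Quaternion.imJ_mul, Quaternion.imK_mul,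
      qI_re, qI_imI, qI_imJ, qI_imK, qJ_re, qJ_imI, qJ_imJ, qJ_imK, qK_re, qK_imI, qK_imJ, qK_imK, smul_eq_mul] <;>
    ring

set_option maxHeartbeats 1000000 in
lemma ghr_key_star (A B C D h : ℍ[ℝ]) :
    h.re • A + h.imI • B + h.imJ • C + h.imK • D =
      (1 / 4 : ℝ) • (A + B * ((1:ℍ[ℝ]) * qI * (1:ℍ[ℝ])⁻¹) + C * ((1:ℍ[ℝ]) * qJ * (1:ℍ[ℝ])⁻¹)
          + D * ((1:ℍ[ℝ]) * qK * (1:ℍ[ℝ])⁻¹)) * star ((1:ℍ[ℝ]) * h * (1:ℍ[ℝ])⁻¹)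
        + (1 / 4 : ℝ) • (A + B * (qI * qI * qI⁻¹) + C * (qI * qJ * qI⁻¹)
          + D * (qI * qK * qI⁻¹)) * star (qI * h * qI⁻¹)
        + (1 / 4 : ℝ) • (A + B * (qJ * qI * qJ⁻¹) + C * (qJ * qJ * qJ⁻¹)
          + D * (qJ * qK * qJ⁻¹)) * star (qJ * h * qJ⁻¹)
        + (1 / 4 : ℝ) • (A + B * (qK * qI * qK⁻¹) + C * (qK * qJ * qK⁻¹)
          + D * (qK * qK * qK⁻¹)) * star (qK * h * qK⁻¹) := by
  simp only [qI_inv, qJ_inv, qK_inv, one_mul, mul_one, inv_one]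
  ext <;>
    simp only [Quaternion.re_add, Quaternion.imI_add, Quaternion.imJ_add, Quaternion.imK_add,
      Quaternion.re_sub, Quaternion.imI_sub, Quaternion.imJ_sub, Quaternion.imK_sub,
      Quaternion.re_neg, Quaternion.imI_neg, Quaternion.imJ_neg, Quaternion.imK_neg,
      Quaternion.re_smul, Quaternion.imI_smul, Quaternion.imJ_smul, Quaternion.imK_smul,
      Quaternion.re_star, Quaternion.imI_star, Quaternion.imJ_star, Quaternion.imK_star,
      Quaternion.re_mul, Quaternion.imI_mul, Quaternion.imJ_mul, Quaternion.imK_mul,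
      qI_re, qI_imI, qI_imJ, qI_imK, qJ_re, qJ_imI, qJ_imJ, qJ_imK, qK_re, qK_imI, qK_imJ, qK_imK, smul_eq_mul] <;>
    ring

lemma fderiv_apply_decomp (f : ℍ[ℝ] → ℍ[ℝ]) (q h : ℍ[ℝ]) :
    fderiv ℝ f q h = h.re • fderiv ℝ f q 1 + h.imI • fderiv ℝ f q qI
      + h.imJ • fderiv ℝ f q qJ + h.imK • fderiv ℝ f q qK := by
  have hdec : h = h.re • 1 + h.imI • qI + h.imJ • qJ + h.imK • qK := by
    ext <;> simp [qI_re, qI_imI, qI_imJ, qI_imK, qJ_re, qJ_imI, qJ_imJ, qJ_imK, qK_re, qK_imI, qK_imJ, qK_imK]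
  conv_lhs => rw [hdec]
  simp [map_add, map_smul]

/-- **The differential of a quaternion function via GHR derivatives** (equation (25)):
`Df(q)[h] = Σ_{μ∈{1,i,j,k}} (∂f/∂q^μ)(q) (μ h μ⁻¹)` and
`Df(q)[h] = Σ_{μ∈{1,i,j,k}} (∂f/∂q^{μ*})(q) (μ h μ⁻¹)*`. -/
theorem fderiv_eq_ghr_sum (f : ℍ[ℝ] → ℍ[ℝ]) (q : ℍ[ℝ]) (hf : DifferentiableAt ℝ f q) :
    ∀ h : ℍ[ℝ],
      fderiv ℝ f q h =
          ghrS (1 : ℍ[ℝ]) f q * ((1 : ℍ[ℝ]) * h * (1 : ℍ[ℝ])⁻¹)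
            + ghrS qI f q * (qI * h * qI⁻¹)
            + ghrS qJ f q * (qJ * h * qJ⁻¹)
            + ghrS qK f q * (qK * h * qK⁻¹)
      ∧ fderiv ℝ f q h =
          ghrSStar (1 : ℍ[ℝ]) f q * star ((1 : ℍ[ℝ]) * h * (1 : ℍ[ℝ])⁻¹)
            + ghrSStar qI f q * star (qI * h * qI⁻¹)
            + ghrSStar qJ f q * star (qJ * h * qJ⁻¹)
            + ghrSStar qK f q * star (qK * h * qK⁻¹) := by

  intro h
  constructor
  · rw [fderiv_apply_decomp f q h, ghrS, ghrS, ghrS, ghrS]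
    exact ghr_key _ _ _ _ h
  · rw [fderiv_apply_decomp f q h, ghrSStar, ghrSStar, ghrSStar, ghrSStar]
    exact ghr_key_star _ _ _ _ h
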